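/- arXiv:0712.1932 — 2 statements merged into one kernel-verified Lean document; each statement's English description precedes it below -/
import Mathlib

section
/- Let R be a commutative ring, let n ≥ 2, let M be an n × (n − 2) matrix over R, and let a, b, c, d be four column vectors in Rⁿ. Writing |M u v| for the determinant of the n × n matrix whose first n − 2 columns are those of M and whose last two columns are u and v, one has |M a b|·|M c d| − |M a c|·|M b d| + |M a d|·|M b c| = 0 (the three-term Plücker relation). -/
/-- The determinant of the `n × n` matrix whose first `n - 2` columns are those of `M`
and whose last two columns are `u` and `v`. -/
noncomputable def detWithTwoCols {R : Type*} [CommRing R] {n : ℕ} (hn : 2 ≤ n)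
    (M : Matrix (Fin n) (Fin (n - 2)) R) (u v : Fin n → R) : R :=
  Matrix.det ((Matrix.fromCols M (Matrix.of fun i => ![u i, v i])).submatrix
    id (finSumFinEquiv.trans (finCongr (Nat.sub_add_cancel hn))).symm)

namespace PluckerAux

variable {R : Type*} [CommRing R] {n : ℕ}

/-- The column-indexing equivalence. -/
def pE (hn : 2 ≤ n) : Fin n ≃ (Fin (n - 2) ⊕ Fin 2) :=
  (finSumFinEquiv.trans (finCongr (Nat.sub_add_cancel hn))).symm

/-- The `n × n` matrix with columns those of `M` followed (in position) by `u`, `v`. -/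
def Nmat (hn : 2 ≤ n) (M : Matrix (Fin n) (Fin (n - 2)) R) (u v : Fin n → R) :
    Matrix (Fin n) (Fin n) R :=
  (Matrix.fromCols M (Matrix.of fun i => ![u i, v i])).submatrix id (pE hn)

lemma detWithTwoCols_eq (hn : 2 ≤ n) (M : Matrix (Fin n) (Fin (n - 2)) R) (u v : Fin n → R) :
    detWithTwoCols hn M u v = (Nmat hn M u v).det := rfl

lemma Nmat_apply (hn : 2 ≤ n) (M : Matrix (Fin n) (Fin (n - 2)) R) (u v : Fin n → R)
    (i j : Fin n) : Nmat hn M u v i j = Sum.elim (M i) ![u i, v i] (pE hn j) := rfl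

section
variable (hn : 2 ≤ n) (M : Matrix (Fin n) (Fin (n - 2)) R)

/-- position of the `u` column -/
def pcol (hn : 2 ≤ n) : Fin n := (pE hn).symm (Sum.inr 0)
/-- position of the `v` column -/
def qcol (hn : 2 ≤ n) : Fin n := (pE hn).symm (Sum.inr 1)

lemma pE_pcol : pE hn (pcol hn) = Sum.inr 0 := (pE hn).apply_symm_apply _
lemma pE_qcol : pE hn (qcol hn) = Sum.inr 1 := (pE hn).apply_symm_apply _

lemma pcol_ne_qcol : pcol hn ≠ qcol hn := by
  intro h
  have := congrArg (pE hn) h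
  rw [pE_pcol, pE_qcol] at this
  simp at this

lemma Nmat_col_inl (u v : Fin n → R) {j : Fin n} {k : Fin (n - 2)}
    (h : pE hn j = Sum.inl k) (i : Fin n) : Nmat hn M u v i j = M i k := by
  rw [Nmat_apply, h]; rfl

lemma Nmat_col_p (u v : Fin n → R) (i : Fin n) : Nmat hn M u v i (pcol hn) = u i := by
  rw [Nmat_apply, pE_pcol]; rfl

lemma Nmat_col_q (u v : Fin n → R) (i : Fin n) : Nmat hn M u v i (qcol hn) = v i := by
  rw [Nmat_apply, pE_qcol]; rfl

lemma Nmat_swap (u v : Fin n → R) :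
    Nmat hn M v u = (Nmat hn M u v).submatrix id (Equiv.swap (pcol hn) (qcol hn)) := by
  funext i j
  rw [Matrix.submatrix_apply, id]
  rcases h : pE hn j with k | t
  · have hjp : j ≠ pcol hn := fun hj => by rw [hj, pE_pcol] at h; simp at h
    have hjq : j ≠ qcol hn := fun hj => by rw [hj, pE_qcol] at h; simp at h
    rw [Equiv.swap_apply_of_ne_of_ne hjp hjq, Nmat_col_inl hn M v u h, Nmat_col_inl hn M u v h]
  · have hj : j = (pE hn).symm (Sum.inr t) := by rw [Equiv.eq_symm_apply, h]
    fin_cases t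
    · have : j = pcol hn := hj
      rw [this, Equiv.swap_apply_left, Nmat_col_p, Nmat_col_q]
    · have : j = qcol hn := hj
      rw [this, Equiv.swap_apply_right, Nmat_col_q, Nmat_col_p]

lemma det_swap (u v : Fin n → R) : (Nmat hn M v u).det = -(Nmat hn M u v).det := by
  rw [Nmat_swap hn M u v, Matrix.det_permute' _ _,
    Equiv.Perm.sign_swap (pcol_ne_qcol hn)]
  push_cast
  ring

lemma updateColumn_p (u v x : Fin n → R) :
    (Nmat hn M u v).updateCol (pcol hn) x = Nmat hn M x v := by
  funext i j
  rcases eq_or_ne j (pcol hn) with hj | hj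
  · rw [hj, Matrix.updateCol_self, Nmat_col_p]
  · rw [Matrix.updateCol_ne hj]
    rcases h : pE hn j with k | t
    · rw [Nmat_col_inl hn M u v h, Nmat_col_inl hn M x v h]
    · have hjj : j = (pE hn).symm (Sum.inr t) := by rw [Equiv.eq_symm_apply, h]
      fin_cases t
      · exact absurd hjj hj
      · have : j = qcol hn := hjj
        rw [this, Nmat_col_q, Nmat_col_q]

lemma det_dup_col (u : Fin n → R) {j : Fin n} {k : Fin (n - 2)}
    (h : pE hn j = Sum.inl k) (v : Fin n → R) :
    (Nmat hn M (fun i => M i k) v).det = 0 := by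
  apply Matrix.det_zero_of_column_eq (i := j) (j := pcol hn)
  · intro hj; rw [hj, pE_pcol] at h; simp at h
  · intro i
    rw [Nmat_col_inl hn M _ v h, Nmat_col_p]

/-- The linear functional `x ↦ det (M x b)`. -/
noncomputable def Lfun (b : Fin n → R) : (Fin n → R) →ₗ[R] R where
  toFun x := (Nmat hn M x b).det
  map_add' x y := by
    show (Nmat hn M (x + y) b).det = (Nmat hn M x b).det + (Nmat hn M y b).det
    rw [← updateColumn_p hn M 0 b (x + y), ← updateColumn_p hn M 0 b x,
      ← updateColumn_p hn M 0 b y, Matrix.det_updateCol_add]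
  map_smul' r x := by
    show (Nmat hn M (r • x) b).det = r * (Nmat hn M x b).det
    rw [← updateColumn_p hn M 0 b (r • x), ← updateColumn_p hn M 0 b x,
      Matrix.det_updateCol_smul]

lemma Lfun_apply (b x : Fin n → R) : Lfun hn M b x = (Nmat hn M x b).det := rfl

end

end PluckerAux

open Matrix PluckerAux

/-- The three-term Plücker relation for determinants. -/
theorem three_term_plucker_relation {R : Type*} [CommRing R] {n : ℕ} (hn : 2 ≤ n)
    (M : Matrix (Fin n) (Fin (n - 2)) R) (a b c d : Fin n → R) :
    detWithTwoCols hn M a b * detWithTwoCols hn M c d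
      - detWithTwoCols hn M a c * detWithTwoCols hn M b d
      + detWithTwoCols hn M a d * detWithTwoCols hn M b c = 0 := by
  classical
  set f : (Fin n → R) → (Fin n → R) → R := fun u v => (Nmat hn M u v).det with hf
  have key : f d c * f a b + f a d * f c b = f a c * f d b := by
    have hcr := Matrix.mulVec_cramer (Nmat hn M a c) d
    have hL := congrArg (Lfun hn M b) hcr
    set A := Nmat hn M a c with hA
    set y := Matrix.cramer A d with hy
    -- expand the left side
    have hmv : A *ᵥ y = ∑ j : Fin n, y j • (fun i => A i j) := by
      funext i
      simp only [Matrix.mulVec, dotProduct, Finset.sum_apply, Pi.smul_apply,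
        smul_eq_mul]
      exact Finset.sum_congr rfl fun j _ => mul_comm _ _
    rw [hmv, map_sum, _root_.map_smul (Lfun hn M b) (A.det)] at hL
    simp only [_root_.map_smul, smul_eq_mul] at hL
    -- the sum reduces to the two terms at pcol and qcol
    have hsum : ∑ j : Fin n, y j * Lfun hn M b (fun i => A i j)
        = y (pcol hn) * Lfun hn M b (fun i => A i (pcol hn))
          + y (qcol hn) * Lfun hn M b (fun i => A i (qcol hn)) := by
      rw [← Finset.sum_pair (pcol_ne_qcol hn)
        (f := fun j => y j * Lfun hn M b (fun i => A i j))]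
      apply (Finset.sum_subset (Finset.subset_univ _) _).symm
      intro j _ hj
      simp only [Finset.mem_insert, Finset.mem_singleton, not_or] at hj
      rcases h : pE hn j with k | t
      · have hcol : (fun i => A i j) = fun i => M i k := by
          funext i; exact Nmat_col_inl hn M a c h i
        rw [hcol, Lfun_apply, det_dup_col hn M a h b, mul_zero]
      · exfalso
        have hjj : j = (pE hn).symm (Sum.inr t) := by rw [Equiv.eq_symm_apply, h]
        fin_cases t
        · exact hj.1 hjj
        · exact hj.2 hjj
    rw [hsum] at hL
    -- identify the pieces
    have hcolp : (fun i => A i (pcol hn)) = a := by funext i; exact Nmat_col_p hn M a c i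
    have hcolq : (fun i => A i (qcol hn)) = c := by funext i; exact Nmat_col_q hn M a c i
    have hyp : y (pcol hn) = f d c := by
      rw [hy, Matrix.cramer_apply, hA, updateColumn_p hn M a c d]
    have hyq : y (qcol hn) = f a d := by
      rw [hy, Matrix.cramer_apply, hA]
      congr 1
      funext i j
      rcases eq_or_ne j (qcol hn) with hj | hj
      · rw [hj, Matrix.updateCol_self, Nmat_col_q]
      · rw [Matrix.updateCol_ne hj]
        rcases h : pE hn j with k | t
        · rw [Nmat_col_inl hn M a c h, Nmat_col_inl hn M a d h]
        · have hjj : j = (pE hn).symm (Sum.inr t) := by rw [Equiv.eq_symm_apply, h]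
          fin_cases t
          · have : j = pcol hn := hjj
            rw [this, Nmat_col_p, Nmat_col_p]
          · exact absurd hjj hj
    rw [hcolp, hcolq, hyp, hyq] at hL
    exact hL
  have s1 : f d c = -f c d := det_swap hn M c d
  have s2 : f c b = -f b c := det_swap hn M b c
  have s3 : f d b = -f b d := det_swap hn M b d
  have e1 : detWithTwoCols hn M a b = f a b := rfl
  have e2 : detWithTwoCols hn M c d = f c d := rfl
  have e3 : detWithTwoCols hn M a c = f a c := rfl
  have e4 : detWithTwoCols hn M b d = f b d := rfl
  have e5 : detWithTwoCols hn M a d = f a d := rfl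
  have e6 : detWithTwoCols hn M b c = f b c := rfl
  rw [e1, e2, e3, e4, e5, e6]
  rw [s1, s2, s3] at key
  linear_combination -key
end

section
/- Let R be a commutative ring, let m ≥ 1, and let A be a 2m × 2m matrix over R that is alternating, i.e. Aᵀ = −A and all diagonal entries of A are zero. Then for any two distinct indices i and j, det(A^{ij}_{ij}) · det A = (det(A_{î ĵ}))², where A^{ij}_{ij} is the (2m − 2) × (2m − 2) matrix obtained from A by deleting rows i, j and columns i, j, and A_{î ĵ} is the (2m − 1) × (2m − 1) matrix obtained from A by deleting row i and column j. -/
open Matrix Finset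

section Aux

variable {R : Type*} [CommRing R] {n : ℕ}

/-- The increasing enumeration of the complement of `{p}` is `Fin.succAbove p`. -/
lemma orderEmbOfFin_compl_singleton {k : ℕ} (p : Fin (k+1))
    (h : ({p}ᶜ : Finset (Fin (k+1))).card = k) :
    ⇑(({p}ᶜ : Finset (Fin (k+1))).orderEmbOfFin h) = p.succAbove := by
  refine (Finset.orderEmbOfFin_unique h (fun x => ?_) (Fin.strictMono_succAbove p)).symm
  simp [Fin.succAbove_ne]

/-- An alternating matrix of odd size has determinant zero. -/
lemma det_alternating_odd {k : ℕ} (hk : Odd k)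
    (B : Matrix (Fin k) (Fin k) R) (hB : Bᵀ = -B) (hD : ∀ x, B x x = 0) : B.det = 0 := by
  set S := MvPolynomial (Fin k × Fin k) ℤ with hS
  set G : Matrix (Fin k) (Fin k) S := Matrix.of fun a b =>
    if a < b then MvPolynomial.X (a, b)
    else if b < a then -MvPolynomial.X (b, a) else 0 with hG
  have hGdet : G.det = 0 := by
    have h1 : Gᵀ = -G := by
      apply Matrix.ext; intro a b
      simp only [hG, transpose_apply, Matrix.neg_apply, of_apply]
      rcases lt_trichotomy a b with h | h | h
      · rw [if_neg (asymm h), if_pos h, if_pos h]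
      · subst h; simp
      · rw [if_pos h, if_neg (asymm h), if_pos h, neg_neg]
    have h2 : G.det = -G.det := by
      conv_lhs => rw [← det_transpose, h1, det_neg, Fintype.card_fin, hk.neg_one_pow,
        neg_one_mul]
    have h3 : (2 : S) * G.det = 0 := by linear_combination h2
    rcases mul_eq_zero.mp h3 with h | h
    · exact absurd h two_ne_zero
    · exact h
  let φ : S →+* R := (MvPolynomial.eval₂Hom (Int.castRingHom R) fun p => B p.1 p.2)
  have hmap : G.map φ = B := by
    apply Matrix.ext; intro a b
    rcases lt_trichotomy a b with h | h | h
    · rw [map_apply, hG, of_apply, if_pos h, MvPolynomial.eval₂Hom_X']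
    · subst h
      rw [map_apply, hG, of_apply, if_neg (lt_irrefl a), if_neg (lt_irrefl a), map_zero, hD a]
    · have hba : Bᵀ b a = (-B) b a := by rw [hB]
      simp only [transpose_apply, Matrix.neg_apply] at hba
      rw [map_apply, hG, of_apply, if_neg (asymm h), if_pos h, map_neg,
        MvPolynomial.eval₂Hom_X', ← hba]
  calc B.det = (G.map φ).det := by rw [hmap]
  _ = φ G.det := (RingHom.map_det φ G).symm
  _ = 0 := by rw [hGdet, map_zero]

/-- equivalence `Fin 2 ≃ {x // x = i ∨ x = j}` -/
def pairEquiv (i j : Fin n) (hij : i ≠ j) : Fin 2 ≃ {x : Fin n // x = i ∨ x = j} where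
  toFun t := if t = 0 then ⟨i, Or.inl rfl⟩ else ⟨j, Or.inr rfl⟩
  invFun x := if x.val = i then 0 else 1
  left_inv t := by
    fin_cases t
    · simp
    · simp [hij.symm]
  right_inv x := by
    rcases x with ⟨x, hx | hx⟩ <;> subst hx
    · simp
    · simp [hij.symm]

lemma det_eq_of_one_outside (M : Matrix (Fin n) (Fin n) R) (i j : Fin n) (hij : i ≠ j)
    (h : ∀ k l, l ≠ i → l ≠ j → M k l = if k = l then (1 : R) else 0) :
    M.det = M i i * M j j - M i j * M j i := by
  classical
  let p : Fin n → Prop := fun x => x = i ∨ x = j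
  let e : {x // p x} ⊕ {x // ¬ p x} ≃ Fin n := Equiv.sumCompl p
  have hsub : M.submatrix e e = fromBlocks
      (M.submatrix (Subtype.val : {x // p x} → Fin n) Subtype.val) 0
      (M.submatrix (Subtype.val : {x // ¬ p x} → Fin n) Subtype.val) 1 := by
    apply Matrix.ext
    rintro (x | x) (y | y) <;>
      simp only [e, submatrix_apply, Equiv.sumCompl_apply_inl, Equiv.sumCompl_apply_inr,
        fromBlocks_apply₁₁, fromBlocks_apply₁₂, fromBlocks_apply₂₁, fromBlocks_apply₂₂,
        Matrix.zero_apply, Matrix.one_apply, submatrix_apply]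
    · have hy : ¬ (↑y = i ∨ ↑y = j) := y.property
      push_neg at hy
      rw [h x.val y.val hy.1 hy.2, if_neg]
      intro hxy
      exact y.property (hxy ▸ x.property)
    · have hy : ¬ (↑y = i ∨ ↑y = j) := y.property
      push_neg at hy
      rw [h x.val y.val hy.1 hy.2]
      by_cases hxy : x = y
      · rw [if_pos hxy, if_pos (by rw [hxy])]
      · rw [if_neg hxy, if_neg (fun hv => hxy (Subtype.ext hv))]
  have hdet1 : M.det = (M.submatrix (Subtype.val : {x // p x} → Fin n) Subtype.val).det := by
    rw [← det_submatrix_equiv_self e, hsub, det_fromBlocks_zero₁₂, det_one, mul_one]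
  rw [hdet1, ← det_submatrix_equiv_self (pairEquiv i j hij), det_fin_two]
  simp [pairEquiv]

lemma det_updateTwo (A : Matrix (Fin n) (Fin n) R) (i j : Fin n) (hij : i ≠ j) :
    ((A.updateCol i (Pi.single i 1)).updateCol j (Pi.single j 1)).det =
      Matrix.det (A.submatrix
        (fun t : Fin (n - 2) => ({i, j}ᶜ : Finset (Fin n)).orderEmbOfFin
          (by rw [Finset.card_compl, Finset.card_pair hij, Fintype.card_fin]) t)
        (fun t : Fin (n - 2) => ({i, j}ᶜ : Finset (Fin n)).orderEmbOfFin
          (by rw [Finset.card_compl, Finset.card_pair hij, Fintype.card_fin]) t)) := by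
  classical
  let p : Fin n → Prop := fun x => x = i ∨ x = j
  let e : {x // p x} ⊕ {x // ¬ p x} ≃ Fin n := Equiv.sumCompl p
  set M := (A.updateCol i (Pi.single i 1)).updateCol j (Pi.single j 1) with hM
  have hcol : ∀ k l, p l → M k l = if k = l then (1 : R) else 0 := by
    intro k l hl
    rcases hl with hl | hl <;> subst hl
    · rw [hM, updateCol_ne hij, updateCol_self]
      simp [Pi.single_apply]
    · rw [hM, updateCol_self]
      simp [Pi.single_apply]
  have houter : ∀ k l, ¬ p l → M k l = A k l := by
    intro k l hl
    have hl1 : l ≠ i := fun h => hl (Or.inl h)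
    have hl2 : l ≠ j := fun h => hl (Or.inr h)
    rw [hM, updateCol_ne hl2, updateCol_ne hl1]
  have hsub : M.submatrix e e = fromBlocks
      1 (M.submatrix (Subtype.val : {x // p x} → Fin n) Subtype.val)
      0 (A.submatrix (Subtype.val : {x // ¬ p x} → Fin n) Subtype.val) := by
    apply Matrix.ext
    rintro (x | x) (y | y) <;>
      simp only [e, submatrix_apply, Equiv.sumCompl_apply_inl, Equiv.sumCompl_apply_inr,
        fromBlocks_apply₁₁, fromBlocks_apply₁₂, fromBlocks_apply₂₁, fromBlocks_apply₂₂,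
        Matrix.zero_apply, Matrix.one_apply, submatrix_apply]
    · rw [hcol x.val y.val y.property]
      by_cases hxy : x = y
      · rw [if_pos (by rw [hxy]), if_pos hxy]
      · rw [if_neg (fun hv => hxy (Subtype.ext hv)), if_neg hxy]
    · rw [hcol x.val y.val y.property, if_neg]
      intro hxy
      exact x.property (hxy ▸ y.property)
    · exact houter x.val y.val y.property
  have hdet1 : M.det =
      (A.submatrix (Subtype.val : {x // ¬ p x} → Fin n) Subtype.val).det := by
    rw [← det_submatrix_equiv_self e, hsub, det_fromBlocks_zero₂₁, det_one, one_mul]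
  have hcard : ({i, j}ᶜ : Finset (Fin n)).card = n - 2 := by
    rw [Finset.card_compl, Finset.card_pair hij, Fintype.card_fin]
  set f := ({i, j}ᶜ : Finset (Fin n)).orderEmbOfFin hcard with hf
  have hmem : ∀ t, ¬ p (f t) := by
    intro t hp
    have := Finset.orderEmbOfFin_mem ({i, j}ᶜ : Finset (Fin n)) hcard t
    rw [Finset.mem_compl, Finset.mem_insert, Finset.mem_singleton] at this
    exact this hp
  let g : Fin (n - 2) → {x // ¬ p x} := fun t => ⟨f t, hmem t⟩
  have hbij : Function.Bijective g := by
    constructor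
    · intro a b hab
      rw [Subtype.ext_iff] at hab
      exact f.injective hab
    · rintro ⟨x, hx⟩
      have hx' : x ∈ ({i, j}ᶜ : Finset (Fin n)) := by
        rw [Finset.mem_compl, Finset.mem_insert, Finset.mem_singleton]
        exact hx
      have : x ∈ Set.range f := by rw [Finset.range_orderEmbOfFin]; exact hx'
      obtain ⟨t, ht⟩ := this
      exact ⟨t, Subtype.ext ht⟩
  let G : Fin (n - 2) ≃ {x // ¬ p x} := Equiv.ofBijective g hbij
  have heq : (A.submatrix (Subtype.val : {x // ¬ p x} → Fin n) Subtype.val).submatrix G G =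
      A.submatrix (fun t => f t) (fun t => f t) := rfl
  rw [hdet1, ← det_submatrix_equiv_self G
    (A.submatrix (Subtype.val : {x // ¬ p x} → Fin n) Subtype.val), heq]

lemma updateColumn_comm' (M : Matrix (Fin n) (Fin n) R) {i j : Fin n} (hij : i ≠ j)
    (b c : Fin n → R) :
    (M.updateCol i b).updateCol j c = (M.updateCol j c).updateCol i b := by
  apply Matrix.ext; intro k l
  by_cases hl1 : l = j
  · subst hl1
    rw [updateCol_self, updateCol_ne (Ne.symm hij), updateCol_self]
  · rw [updateCol_ne hl1]
    by_cases hl2 : l = i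
    · subst hl2
      rw [updateCol_self, updateCol_self]
    · rw [updateCol_ne hl2, updateCol_ne hl2, updateCol_ne hl1]

lemma key_identity (A : Matrix (Fin n) (Fin n) R) (i j : Fin n) (hij : i ≠ j) :
    A.det * (A.det * ((A.updateCol i (Pi.single i (1:R))).updateCol j
      (Pi.single j (1:R))).det) =
    A.det * (adjugate A i i * adjugate A j j - adjugate A i j * adjugate A j i) := by
  classical
  set C : Matrix (Fin n) (Fin n) R :=
    ((1 : Matrix (Fin n) (Fin n) R).updateCol i (fun k => adjugate A k i)).updateCol j
      (fun k => adjugate A k j) with hC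
  have hCi : ∀ k, C k i = adjugate A k i := by
    intro k
    rw [hC, updateCol_ne hij, updateCol_self]
  have hCj : ∀ k, C k j = adjugate A k j := by
    intro k
    rw [hC, updateCol_self]
  have hCdet : C.det = adjugate A i i * adjugate A j j - adjugate A i j * adjugate A j i := by
    rw [det_eq_of_one_outside C i j hij ?_]
    · rw [hCi i, hCj j, hCj i, hCi j]
    · intro k l hl1 hl2
      rw [hC, updateCol_ne hl2, updateCol_ne hl1, Matrix.one_apply]
  have hAC : A * C = (A.updateCol i (A.det • (Pi.single i (1:R) : Fin n → R))).updateCol j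
      (A.det • (Pi.single j (1:R) : Fin n → R)) := by
    apply Matrix.ext; intro k l
    have hadj := congrFun (congrFun (mul_adjugate A) k)
    by_cases hl1 : j = l
    · subst hl1
      rw [Matrix.mul_apply]
      simp_rw [hCj]
      rw [← Matrix.mul_apply, hadj j, updateCol_self]
      simp [Matrix.one_apply, Pi.single_apply, mul_comm]
    · by_cases hl2 : i = l
      · subst hl2
        rw [Matrix.mul_apply]
        simp_rw [hCi]
        rw [← Matrix.mul_apply, hadj i, updateCol_ne (Ne.symm hl1), updateCol_self]
        simp [Matrix.one_apply, Pi.single_apply, mul_comm]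
      · rw [updateCol_ne (Ne.symm hl1), updateCol_ne (Ne.symm hl2), Matrix.mul_apply]
        simp_rw [hC, updateCol_ne (Ne.symm hl1), updateCol_ne (Ne.symm hl2),
          Matrix.one_apply]
        simp [mul_ite]
  calc A.det * (A.det * ((A.updateCol i (Pi.single i (1:R))).updateCol j
        (Pi.single j (1:R))).det)
      = ((A.updateCol i (A.det • (Pi.single i (1:R) : Fin n → R))).updateCol j
        (A.det • (Pi.single j (1:R) : Fin n → R))).det := by
          conv_rhs => rw [det_updateCol_smul, updateColumn_comm' A hij,
            det_updateCol_smul, ← updateColumn_comm' A hij]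
    _ = (A * C).det := by rw [hAC]
    _ = A.det * C.det := det_mul A C
    _ = A.det * (adjugate A i i * adjugate A j j - adjugate A i j * adjugate A j i) := by
          rw [hCdet]

end Aux

/-- The determinant of the `(n - 1) × (n - 1)` matrix obtained from `A` by deleting
row `p` and column `q` (remaining indices in increasing order). -/
noncomputable def minor1 {R : Type*} [CommRing R] {n : ℕ}
    (A : Matrix (Fin n) (Fin n) R) (p q : Fin n) : R :=
  Matrix.det (A.submatrix
    (fun t : Fin (n - 1) => ({p}ᶜ : Finset (Fin n)).orderEmbOfFin
      (by rw [Finset.card_compl, Finset.card_singleton, Fintype.card_fin]) t)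
    (fun t : Fin (n - 1) => ({q}ᶜ : Finset (Fin n)).orderEmbOfFin
      (by rw [Finset.card_compl, Finset.card_singleton, Fintype.card_fin]) t))

/-- The determinant of the `(n - 2) × (n - 2)` matrix obtained from `A` by deleting
rows `i`, `j` and columns `i`, `j` (remaining indices in increasing order). -/
noncomputable def minor2 {R : Type*} [CommRing R] {n : ℕ}
    (A : Matrix (Fin n) (Fin n) R) (i j p q : Fin n) (hij : i ≠ j) (hpq : p ≠ q) : R :=
  Matrix.det (A.submatrix
    (fun t : Fin (n - 2) => ({i, j}ᶜ : Finset (Fin n)).orderEmbOfFin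
      (by rw [Finset.card_compl, Finset.card_pair hij, Fintype.card_fin]) t)
    (fun t : Fin (n - 2) => ({p, q}ᶜ : Finset (Fin n)).orderEmbOfFin
      (by rw [Finset.card_compl, Finset.card_pair hpq, Fintype.card_fin]) t))

section Jacobi

lemma det_updateTwo_minor2 {R : Type*} [CommRing R] {n : ℕ}
    (A : Matrix (Fin n) (Fin n) R) (i j : Fin n) (hij : i ≠ j) :
    ((A.updateCol i (Pi.single i 1)).updateCol j (Pi.single j 1)).det =
      minor2 A i j i j hij hij :=
  det_updateTwo A i j hij

/-- The Desnanot–Jacobi-type identity over an arbitrary commutative ring. -/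
lemma jacobi_identity {R : Type*} [CommRing R] {n : ℕ}
    (A : Matrix (Fin n) (Fin n) R) (i j : Fin n) (hij : i ≠ j) :
    A.det * minor2 A i j i j hij hij =
      adjugate A i i * adjugate A j j - adjugate A i j * adjugate A j i := by
  let S := MvPolynomial (Fin n × Fin n) ℤ
  let G : Matrix (Fin n) (Fin n) S := mvPolynomialX (Fin n) (Fin n) ℤ
  have hG : G.det * minor2 G i j i j hij hij =
      adjugate G i i * adjugate G j j - adjugate G i j * adjugate G j i := by
    apply mul_left_cancel₀ (det_mvPolynomialX_ne_zero (Fin n) ℤ)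
    rw [← det_updateTwo_minor2 G i j hij]
    exact key_identity G i j hij
  let φ : S →+* R := (MvPolynomial.eval₂Hom (Int.castRingHom R) fun p => A p.1 p.2)
  have hGA : φ.mapMatrix G = A := by
    apply Matrix.ext; intro a b
    show φ (mvPolynomialX (Fin n) (Fin n) ℤ a b) = A a b
    rw [mvPolynomialX_apply, MvPolynomial.eval₂Hom_X']
  have h1 : φ G.det = A.det := by rw [RingHom.map_det, hGA]
  have h2 : ∀ a b, φ (adjugate G a b) = adjugate A a b := by
    intro a b
    have h := congrFun (congrFun (RingHom.map_adjugate φ G) a) b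
    calc φ (adjugate G a b) = (φ.mapMatrix (adjugate G)) a b := rfl
      _ = (adjugate (φ.mapMatrix G)) a b := h
      _ = adjugate A a b := by rw [hGA]
  have h3 : φ (minor2 G i j i j hij hij) = minor2 A i j i j hij hij := by
    unfold minor2
    rw [RingHom.map_det, RingHom.mapMatrix_apply, ← submatrix_map, ← RingHom.mapMatrix_apply,
      hGA]
  calc A.det * minor2 A i j i j hij hij
      = φ (G.det * minor2 G i j i j hij hij) := by rw [_root_.map_mul, h1, h3]
    _ = φ (adjugate G i i * adjugate G j j - adjugate G i j * adjugate G j i) := by rw [hG]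
    _ = adjugate A i i * adjugate A j j - adjugate A i j * adjugate A j i := by
        rw [map_sub, _root_.map_mul, _root_.map_mul, h2, h2, h2, h2]

end Jacobi

section Main

variable {R : Type*} [CommRing R]

lemma orderEmbOfFin_compl_singleton' {k : ℕ} (p : Fin (k+1))
    (h : ({p}ᶜ : Finset (Fin (k+1))).card = (k+1) - 1) (t : Fin ((k+1) - 1)) :
    ({p}ᶜ : Finset (Fin (k+1))).orderEmbOfFin h t = p.succAbove t :=
  congrFun (orderEmbOfFin_compl_singleton p h) t

lemma alternating_jacobi_aux {n : ℕ} (hn : Even n)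
    (A : Matrix (Fin n) (Fin n) R)
    (hAlt : Aᵀ = -A) (hDiag : ∀ i, A i i = 0)
    (i j : Fin n) (hij : i ≠ j) :
    minor2 A i j i j hij hij * A.det = (minor1 A i j) ^ 2 := by
  cases n with
  | zero => exact i.elim0
  | succ k =>
    have hk : Odd k := by
      rcases Nat.even_or_odd k with h | h
      · exact absurd hn (by simp [Nat.even_add_one, h])
      · exact h
    have hminor1 : ∀ p q : Fin (k+1),
        minor1 A p q = (A.submatrix p.succAbove q.succAbove).det := by
      intro p q
      unfold minor1
      simp only [orderEmbOfFin_compl_singleton']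
    have hadj : ∀ p q : Fin (k+1),
        adjugate A p q = (-1:R)^((p:ℕ)+(q:ℕ)) * minor1 A q p := by
      intro p q
      rw [adjugate_fin_succ_eq_det_submatrix, ← hminor1 q p, add_comm (q:ℕ) (p:ℕ)]
    have hdiag1 : ∀ p, minor1 A p p = 0 := by
      intro p
      rw [hminor1]
      refine det_alternating_odd hk _ ?_ ?_
      · apply Matrix.ext; intro a b
        have := congrFun (congrFun hAlt (p.succAbove a)) (p.succAbove b)
        simpa using this
      · intro x
        exact hDiag _
    have hskew : adjugate A j i = - adjugate A i j := by
      have h1 : (adjugate A)ᵀ = - adjugate A := by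
        rw [adjugate_transpose, hAlt, ← neg_one_smul R A, adjugate_smul, Fintype.card_fin,
          Nat.add_sub_cancel, hk.neg_one_pow, neg_one_smul]
      have := congrFun (congrFun h1 i) j
      simpa using this
    have hii : adjugate A i i = 0 := by rw [hadj i i, hdiag1, mul_zero]
    have hjj : adjugate A j j = 0 := by rw [hadj j j, hdiag1, mul_zero]
    have hji : adjugate A j i = (-1:R)^((i:ℕ)+(j:ℕ)) * minor1 A i j := by
      rw [hadj j i, add_comm (j:ℕ) (i:ℕ)]
    calc minor2 A i j i j hij hij * A.det
        = A.det * minor2 A i j i j hij hij := mul_comm _ _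
      _ = adjugate A i i * adjugate A j j - adjugate A i j * adjugate A j i :=
          jacobi_identity A i j hij
      _ = adjugate A j i ^ 2 := by rw [hii, hjj, hskew]; ring
      _ = ((-1:R)^((i:ℕ)+(j:ℕ)))^2 * minor1 A i j ^ 2 := by rw [hji]; ring
      _ = minor1 A i j ^ 2 := by
          rw [← pow_mul, mul_comm ((i:ℕ)+(j:ℕ)) 2, pow_mul, neg_one_sq, one_pow, one_mul]

end Main

/-- For an alternating `2m × 2m` matrix `A` (i.e. `Aᵀ = −A` with zero diagonal) and
distinct indices `i`, `j`, one has `det(A^{ij}_{ij}) · det A = (det A_{î ĵ})²`. -/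
theorem alternating_jacobi_square {R : Type*} [CommRing R] {m : ℕ} (hm : 1 ≤ m)
    (A : Matrix (Fin (2 * m)) (Fin (2 * m)) R)
    (hAlt : Aᵀ = -A) (hDiag : ∀ i, A i i = 0)
    (i j : Fin (2 * m)) (hij : i ≠ j) :
    minor2 A i j i j hij hij * A.det = (minor1 A i j) ^ 2 :=
  alternating_jacobi_aux (even_two_mul m) A hAlt hDiag i j hij
end
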